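/- For every p ≥ 1, the function (a, b) ↦ det(sin(a_i · b_j))_{1 ≤ i,j ≤ p} on ℝ^p × ℝ^p is not identically zero. -/

import Mathlib

theorem stmt3 (p : ℕ) (hp : 1 ≤ p) :
    ∃ a b : Fin p → ℝ,
      Matrix.det (Matrix.of fun i j : Fin p => Real.sin (a i * b j)) ≠ 0 := by
  refine ⟨fun i => Real.pi / 2 ^ ((i : ℕ) + 1), fun j => 2 ^ (j : ℕ), ?_⟩
  have hzero : ∀ i j : Fin p, i < j →
      (Matrix.of fun i j : Fin p => Real.sin (Real.pi / 2 ^ ((i : ℕ) + 1) * 2 ^ (j : ℕ))) i j = 0 := by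
    intro i j hij
    have h : (Real.pi / 2 ^ ((i : ℕ) + 1)) * 2 ^ (j : ℕ)
        = (2 ^ ((j : ℕ) - (i : ℕ) - 1) : ℕ) * Real.pi := by
      have hj : (j : ℕ) = ((i : ℕ) + 1) + ((j : ℕ) - (i : ℕ) - 1) := by omega
      have h2 : (2 : ℝ) ^ (j : ℕ) = 2 ^ ((i : ℕ) + 1) * 2 ^ ((j : ℕ) - (i : ℕ) - 1) := by
        rw [← pow_add, ← hj]
      push_cast
      rw [h2]
      field_simp
    simp only [Matrix.of_apply, h, Real.sin_nat_mul_pi]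
  rw [Matrix.det_of_lowerTriangular _ hzero]
  have hdiag : ∀ i : Fin p,
      (Matrix.of fun i j : Fin p => Real.sin (Real.pi / 2 ^ ((i : ℕ) + 1) * 2 ^ (j : ℕ))) i i = 1 := by
    intro i
    have h : Real.pi / 2 ^ ((i : ℕ) + 1) * 2 ^ (i : ℕ) = Real.pi / 2 := by
      rw [pow_succ]
      field_simp
    simp [h, Real.sin_pi_div_two]
  simp [hdiag]
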